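/- arXiv:1202.3399 — 2 statements merged into one kernel-verified Lean document; each statement's English description precedes it below -/
import Mathlib

section
/- If W₁ and W₂ are real matrices with the same number of columns and W₁ᵀW₁ = W₂ᵀW₂, then for any strategy matrix A with W₁ A⁺ A = W₁ we also have W₂ A⁺ A = W₂, and ‖W₁ A⁺‖_F = ‖W₂ A⁺‖_F. -/
open Matrix

/-- `Ap` is the Moore–Penrose pseudoinverse of `A`. -/
def IsMoorePenrose {m n : ℕ} (A : Matrix (Fin m) (Fin n) ℝ)
    (Ap : Matrix (Fin n) (Fin m) ℝ) : Prop :=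
  A * Ap * A = A ∧ Ap * A * Ap = Ap ∧ (A * Ap)ᵀ = A * Ap ∧ (Ap * A)ᵀ = Ap * A

/-- The Frobenius norm `‖M‖_F = sqrt (trace (Mᵀ M))`. -/
noncomputable def frobNorm {m n : ℕ} (M : Matrix (Fin m) (Fin n) ℝ) : ℝ :=
  Real.sqrt (Mᵀ * M).trace

lemma transpose_mul_self_eq_zero {m n : ℕ} {M : Matrix (Fin m) (Fin n) ℝ}
    (h : Mᵀ * M = 0) : M = 0 := by
  have : Mᴴ * M = 0 := by
    rw [Matrix.conjTranspose_eq_transpose_of_trivial]; exact h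
  exact (Matrix.conjTranspose_mul_self_eq_zero).mp this

/-- If `W₁ᵀW₁ = W₂ᵀW₂` then any strategy representing `W₁` also represents `W₂`,
with equal Frobenius norms `‖W₁ A⁺‖_F = ‖W₂ A⁺‖_F`. -/
theorem equiv_workloads_strategy {m₁ m₂ n p : ℕ}
    (W₁ : Matrix (Fin m₁) (Fin n) ℝ) (W₂ : Matrix (Fin m₂) (Fin n) ℝ)
    (hW : W₁ᵀ * W₁ = W₂ᵀ * W₂)
    (A : Matrix (Fin p) (Fin n) ℝ) (Ap : Matrix (Fin n) (Fin p) ℝ)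
    (hAp : IsMoorePenrose A Ap) (h₁ : W₁ * Ap * A = W₁) :
    W₂ * Ap * A = W₂ ∧ frobNorm (W₁ * Ap) = frobNorm (W₂ * Ap) := by
  obtain ⟨-, -, -, hP⟩ := hAp
  set P := Ap * A with hPdef
  have h₁' : W₁ * P = W₁ := by rw [hPdef, ← Matrix.mul_assoc]; exact h₁
  have key : (W₂ - W₂ * P)ᵀ * (W₂ - W₂ * P) = (W₁ - W₁ * P)ᵀ * (W₁ - W₁ * P) := by
    simp only [Matrix.transpose_sub, Matrix.transpose_mul, Matrix.sub_mul,
      Matrix.mul_sub, hP, Matrix.mul_assoc]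
    rw [← Matrix.mul_assoc W₂ᵀ W₂ P, ← Matrix.mul_assoc W₁ᵀ W₁ P, ← hW]
  have hz : (W₂ - W₂ * P)ᵀ * (W₂ - W₂ * P) = 0 := by
    rw [key, h₁', sub_self, Matrix.transpose_zero, Matrix.zero_mul]
  have h₂' : W₂ - W₂ * P = 0 := transpose_mul_self_eq_zero hz
  have h₂ : W₂ * Ap * A = W₂ := by
    rw [Matrix.mul_assoc, ← hPdef]
    exact (sub_eq_zero.mp h₂').symm
  refine ⟨h₂, ?_⟩
  have : (W₁ * Ap)ᵀ * (W₁ * Ap) = (W₂ * Ap)ᵀ * (W₂ * Ap) := by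
    simp only [Matrix.transpose_mul]
    rw [Matrix.mul_assoc, Matrix.mul_assoc, ← Matrix.mul_assoc W₁ᵀ,
      ← Matrix.mul_assoc W₂ᵀ, hW]
  unfold frobNorm
  rw [this]
end

section
/- Let W₁ (m₁×n) and W₂ (m₂×n) be real matrices with W₂ᵀW₂ − W₁ᵀW₁ positive semidefinite. Then the sum of the singular values of W₁ is at most the sum of the singular values of W₂, i.e., trace(√(W₁ᵀW₁)) ≤ trace(√(W₂ᵀW₂)). -/
open Matrix

/-- The positive semidefinite square root of a positive semidefinite matrix
(the definition `Matrix.PosSemidef.sqrt` of the older Mathlib, removed since). -/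
noncomputable def Matrix.PosSemidef.sqrt {𝕜 : Type*} [RCLike 𝕜] [PartialOrder 𝕜] [StarOrderedRing 𝕜] {n : Type*}
    [Fintype n] [DecidableEq n] {A : Matrix n n 𝕜} (hA : A.PosSemidef) : Matrix n n 𝕜 :=
  (hA.1.eigenvectorUnitary : Matrix n n 𝕜) *
    diagonal (((↑) : ℝ → 𝕜) ∘ (√·) ∘ hA.1.eigenvalues) *
    (star hA.1.eigenvectorUnitary : Matrix n n 𝕜)

section Aux

variable {k : ℕ}

lemma Matrix.PosSemidef.posSemidef_sqrt {M : Matrix (Fin k) (Fin k) ℝ} (h : M.PosSemidef) :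
    h.sqrt.PosSemidef := by
  unfold Matrix.PosSemidef.sqrt
  have hD : (diagonal (((↑) : ℝ → ℝ) ∘ (√·) ∘ h.1.eigenvalues)).PosSemidef :=
    Matrix.PosSemidef.diagonal (fun i => Real.sqrt_nonneg _)
  have := hD.mul_mul_conjTranspose_same (h.1.eigenvectorUnitary : Matrix (Fin k) (Fin k) ℝ)
  rwa [← Matrix.star_eq_conjTranspose] at this

lemma Matrix.PosSemidef.sqrt_mul_self {M : Matrix (Fin k) (Fin k) ℝ} (h : M.PosSemidef) :
    h.sqrt * h.sqrt = M := by
  unfold Matrix.PosSemidef.sqrt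
  have hU : (star h.1.eigenvectorUnitary : Matrix (Fin k) (Fin k) ℝ) *
      (h.1.eigenvectorUnitary : Matrix (Fin k) (Fin k) ℝ) = 1 := Unitary.coe_star_mul_self _
  have hDD : diagonal ((RCLike.ofReal : ℝ → ℝ) ∘ (√·) ∘ h.1.eigenvalues) *
      diagonal ((RCLike.ofReal : ℝ → ℝ) ∘ (√·) ∘ h.1.eigenvalues) =
      diagonal (RCLike.ofReal ∘ h.1.eigenvalues) := by
    rw [diagonal_mul_diagonal]
    congr 1
    funext i
    simp [Real.mul_self_sqrt (h.eigenvalues_nonneg i)]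
  conv_rhs => rw [h.1.spectral_theorem, Unitary.conjStarAlgAut_apply]
  rw [← hDD]
  calc _ = (h.1.eigenvectorUnitary : Matrix (Fin k) (Fin k) ℝ) *
        diagonal ((RCLike.ofReal : ℝ → ℝ) ∘ (√·) ∘ h.1.eigenvalues) *
        ((star h.1.eigenvectorUnitary : Matrix (Fin k) (Fin k) ℝ) *
          (h.1.eigenvectorUnitary : Matrix (Fin k) (Fin k) ℝ)) *
        diagonal ((RCLike.ofReal : ℝ → ℝ) ∘ (√·) ∘ h.1.eigenvalues) *
        (star h.1.eigenvectorUnitary : Matrix (Fin k) (Fin k) ℝ) := by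
          simp only [Matrix.mul_assoc]
    _ = _ := by rw [hU, Matrix.mul_one]; simp only [Matrix.mul_assoc]

end Aux

section Aux

variable {k : ℕ}

lemma psd_trace_nonneg {M : Matrix (Fin k) (Fin k) ℝ} (h : M.PosSemidef) :
    0 ≤ M.trace := by
  rw [Matrix.trace]
  apply Finset.sum_nonneg
  intro i _
  exact h.diag_nonneg

lemma psd_smul {M : Matrix (Fin k) (Fin k) ℝ} (h : M.PosSemidef) {c : ℝ} (hc : 0 ≤ c) :
    (c • M).PosSemidef := by
  constructor
  · rw [Matrix.IsHermitian, Matrix.conjTranspose_smul, h.1, star_trivial]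
  · intro x
    exact (h.smul hc).2 x

lemma psd_trace_mul_nonneg' {s r : Matrix (Fin k) (Fin k) ℝ} (hs : sᴴ = s) (hr : rᴴ = r) :
    0 ≤ (s * s * (r * r)).trace := by
  have h := psd_trace_nonneg (Matrix.posSemidef_conjTranspose_mul_self (s * r))
  rw [Matrix.conjTranspose_mul, hs, hr] at h
  calc (0:ℝ) ≤ (r * s * (s * r)).trace := h
  _ = ((r * s * s) * r).trace := by rw [Matrix.mul_assoc (r * s) s r]
  _ = (r * (r * s * s)).trace := Matrix.trace_mul_comm _ _
  _ = ((r * r) * (s * s)).trace := by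
      congr 1
      noncomm_ring
  _ = (s * s * (r * r)).trace := Matrix.trace_mul_comm _ _

lemma psd_trace_mul_nonneg {P Q : Matrix (Fin k) (Fin k) ℝ}
    (hP : P.PosSemidef) (hQ : Q.PosSemidef) : 0 ≤ (P * Q).trace := by
  have h := psd_trace_mul_nonneg' hP.posSemidef_sqrt.1 hQ.posSemidef_sqrt.1
  rwa [hP.sqrt_mul_self, hQ.sqrt_mul_self] at h

end Aux

/-- If `W₂ᵀW₂ − W₁ᵀW₁` is positive semidefinite, then the sum of the singular values of `W₁`
is at most that of `W₂`: `trace √(W₁ᵀW₁) ≤ trace √(W₂ᵀW₂)`. -/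
theorem sum_singular_values_mono {m₁ m₂ n : ℕ}
    (W₁ : Matrix (Fin m₁) (Fin n) ℝ) (W₂ : Matrix (Fin m₂) (Fin n) ℝ)
    (h₁ : (W₁ᵀ * W₁).PosSemidef) (h₂ : (W₂ᵀ * W₂).PosSemidef)
    (hle : (W₂ᵀ * W₂ - W₁ᵀ * W₁).PosSemidef) :
    h₁.sqrt.trace ≤ h₂.sqrt.trace := by
  set A := W₁ᵀ * W₁ with hA
  set B := W₂ᵀ * W₂ with hB
  set S := h₁.sqrt with hSdef
  set R := h₂.sqrt with hRdef
  have hS := h₁.posSemidef_sqrt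
  have hR := h₂.posSemidef_sqrt
  have hSsym : Sᴴ = S := hS.1
  have hSS : S * S = A := h₁.sqrt_mul_self
  have hRR : R * R = B := h₂.sqrt_mul_self
  -- main estimate for each ε > 0
  have main : ∀ ε : ℝ, 0 < ε → S.trace ≤ R.trace + ε * n := by
    intro ε hε
    set T : Matrix (Fin n) (Fin n) ℝ := R + ε • 1 with hTdef
    have hone : (ε • (1 : Matrix (Fin n) (Fin n) ℝ)).PosDef := by
      have : (ε • (1 : Matrix (Fin n) (Fin n) ℝ)) = Matrix.diagonal (fun _ => ε) := by
        simp [Matrix.smul_eq_diagonal_mul]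
      rw [this]
      exact Matrix.posDef_diagonal_iff.2 fun _ => hε
    have hT : T.PosDef := Matrix.PosDef.posSemidef_add hR hone
    have hTpsd := hT.posSemidef
    set Q : Matrix (Fin n) (Fin n) ℝ := hTpsd.sqrt with hQdef
    have hQ := hTpsd.posSemidef_sqrt
    have hQQ : Q * Q = T := hTpsd.sqrt_mul_self
    have hQsym : Qᴴ = Q := hQ.1
    have hQunit : IsUnit Q.det := by
      have hdet : Q.det * Q.det = T.det := by rw [← Matrix.det_mul, hQQ]
      have hTd : 0 < T.det := hT.det_pos
      have : Q.det ≠ 0 := by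
        intro h0
        rw [h0, mul_zero] at hdet
        exact hTd.ne' hdet.symm
      exact this.isUnit
    have hQinv : Q⁻¹ * Q = 1 := Matrix.nonsing_inv_mul _ hQunit
    have hQinv' : Q * Q⁻¹ = 1 := Matrix.mul_nonsing_inv _ hQunit
    have hQinvsym : Q⁻¹ᴴ = Q⁻¹ := by rw [Matrix.conjTranspose_nonsing_inv, hQsym]
    have hTinv : Q⁻¹ * Q⁻¹ = T⁻¹ := by rw [← Matrix.mul_inv_rev, hQQ]
    -- AM-GM: 0 ≤ tr (T⁻¹ * A) - 2 tr S + tr T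
    have amgm : 0 ≤ (T⁻¹ * A).trace - 2 * S.trace + T.trace := by
      have h0 : 0 ≤ (((Q⁻¹ * S - Q)ᴴ) * (Q⁻¹ * S - Q)).trace :=
        psd_trace_nonneg (Matrix.posSemidef_conjTranspose_mul_self _)
      have hexp : ((Q⁻¹ * S - Q)ᴴ) * (Q⁻¹ * S - Q)
          = S * (Q⁻¹ * Q⁻¹) * S - S * (Q⁻¹ * Q) - (Q * Q⁻¹) * S + Q * Q := by
        rw [Matrix.conjTranspose_sub, Matrix.conjTranspose_mul, hQinvsym, hSsym, hQsym]
        noncomm_ring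
      rw [hexp, hQinv, hQinv', hTinv, hQQ, Matrix.mul_one, Matrix.one_mul] at h0
      have htr : (S * T⁻¹ * S - S - S + T).trace
          = (T⁻¹ * A).trace - 2 * S.trace + T.trace := by
        rw [Matrix.trace_add, Matrix.trace_sub, Matrix.trace_sub]
        have h1 : (S * T⁻¹ * S).trace = (T⁻¹ * A).trace := by
          rw [Matrix.trace_mul_comm (S * T⁻¹) S, ← Matrix.mul_assoc, hSS]
          exact Matrix.trace_mul_comm _ _
        rw [h1]; ring
      rw [htr] at h0
      exact h0
    -- tr (T⁻¹ * A) ≤ tr T, since T² - A is psd and T⁻¹ psd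
    have step2 : (T⁻¹ * A).trace ≤ T.trace := by
      have hT2 : T * T - A = (B - A) + (ε • R + (ε • R + (ε * ε) • (1 : Matrix (Fin n) (Fin n) ℝ))) := by
        rw [hTdef, ← hRR]
        simp only [add_mul, mul_add, Matrix.smul_mul, Matrix.mul_smul, Matrix.one_mul,
          Matrix.mul_one, smul_smul]
        abel
      have hTTA : (T * T - A).PosSemidef := by
        rw [hT2]
        exact hle.add ((psd_smul hR hε.le).add
          ((psd_smul hR hε.le).add (psd_smul Matrix.PosSemidef.one (by positivity))))
      have h0 : 0 ≤ (T⁻¹ * (T * T - A)).trace :=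
        psd_trace_mul_nonneg hT.inv.posSemidef hTTA
      have hTT : T⁻¹ * (T * T) = T := by
        rw [← Matrix.mul_assoc, Matrix.nonsing_inv_mul _ hT.det_pos.ne'.isUnit, Matrix.one_mul]
      have heq : T⁻¹ * (T * T - A) = T - T⁻¹ * A := by
        rw [Matrix.mul_sub, hTT]
      rw [heq, Matrix.trace_sub] at h0
      linarith
    have htrT : T.trace = R.trace + ε * n := by
      rw [hTdef, Matrix.trace_add, Matrix.trace_smul, Matrix.trace_one]
      simp [smul_eq_mul]
    nlinarith [amgm, step2, htrT]
  refine le_of_forall_pos_le_add fun δ hδ => ?_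
  have hε : (0:ℝ) < δ / (n + 1) := by positivity
  have hm := main (δ / (n + 1)) hε
  have hn : δ / (n + 1) * n ≤ δ := by
    rw [div_mul_eq_mul_div, div_le_iff₀ (by positivity)]
    nlinarith [hδ.le]
  linarith
end
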